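/- Let A, B be binary strings of length n with 1(A) = 0(B) = α, and n > 2α. Partition A = L_A ++ M_A ++ R_A and B = L_B ++ M_B ++ R_B with |L_A| = |R_A| = |L_B| = |R_B| = α. If 1(R_B) > α/2 + β and 0(L_A) > α/2 + β for some β > 0, then LCS(A,B) ≥ min(0(L_A), 0(L_B ++ M_B)) + min(1(M_A ++ R_A), 1(R_B)) > α + 2β. -/

import Mathlib

/-- Length of the longest common subsequence of two binary strings. -/
def lcsLen (A B : List Bool) : ℕ :=
  ((A.sublists.filter (fun c => decide (c.Sublist B))).map List.length).foldr max 0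

lemma le_foldr_max (l : List ℕ) (a : ℕ) (h : a ∈ l) : a ≤ l.foldr max 0 := by
  induction l with
  | nil => simp at h
  | cons b t ih =>
    rcases List.mem_cons.mp h with h | h
    · simp [h, le_max_iff]
    · exact le_trans (ih h) (by simp [le_max_iff])

lemma lcsLen_ge (A B c : List Bool) (hA : c.Sublist A) (hB : c.Sublist B) :
    c.length ≤ lcsLen A B := by
  apply le_foldr_max
  apply List.mem_map_of_mem
  rw [List.mem_filter]
  exact ⟨List.mem_sublists.mpr hA, by simpa using hB⟩

lemma count_tf (l : List Bool) : l.count true + l.count false = l.length := by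
  induction l with
  | nil => rfl
  | cons b t ih => cases b <;> simp [List.count_cons] <;> omega

theorem case_5 (A B LA MA RA LB MB RB : List Bool) (n α : ℕ) (β : ℝ) (hβ : 0 < β)
    (hAn : A.length = n) (hBn : B.length = n) (hn : n > 2 * α)
    (h1A : A.count true = α) (h0B : B.count false = α)
    (hA : A = LA ++ MA ++ RA) (hB : B = LB ++ MB ++ RB)
    (hLA : LA.length = α) (hRA : RA.length = α) (hLB : LB.length = α) (hRB : RB.length = α)
    (h1RB : (RB.count true : ℝ) > (α : ℝ) / 2 + β)
    (h0LA : (LA.count false : ℝ) > (α : ℝ) / 2 + β) :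
    (lcsLen A B : ℝ) ≥
      (min (LA.count false) ((LB ++ MB).count false) : ℝ) +
      (min ((MA ++ RA).count true) (RB.count true) : ℝ) ∧
    (min (LA.count false) ((LB ++ MB).count false) : ℝ) +
      (min ((MA ++ RA).count true) (RB.count true) : ℝ) > (α : ℝ) + 2 * β := by
  have e1 : (LB ++ MB).count false = RB.count true := by
    have h1 : (LB ++ MB).count false + RB.count false = α := by
      rw [hB] at h0B; simp [List.count_append] at h0B ⊢; omega
    have h2 : RB.count true + RB.count false = α := by rw [count_tf, hRB]
    omega
  have e2 : (MA ++ RA).count true = LA.count false := by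
    have h1 : LA.count true + (MA ++ RA).count true = α := by
      rw [hA] at h1A; simp [List.count_append] at h1A ⊢; omega
    have h2 : LA.count true + LA.count false = α := by rw [count_tf, hLA]
    omega
  set k := min (LA.count false) ((LB ++ MB).count false) with hk
  set m := min ((MA ++ RA).count true) (RB.count true) with hm
  constructor
  · have hc1 : (List.replicate k false ++ List.replicate m true).Sublist A := by
      rw [hA, List.append_assoc]
      exact List.Sublist.append
        (List.replicate_sublist_iff.mpr (min_le_left _ _))
        (List.replicate_sublist_iff.mpr (min_le_left _ _))
    have hc2 : (List.replicate k false ++ List.replicate m true).Sublist B := by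
      rw [hB]
      exact List.Sublist.append
        (List.replicate_sublist_iff.mpr (min_le_right _ _))
        (List.replicate_sublist_iff.mpr (min_le_right _ _))
    have h := lcsLen_ge A B _ hc1 hc2
    simp only [List.length_append, List.length_replicate] at h
    rw [ge_iff_le, ← Nat.cast_min, ← Nat.cast_min]
    exact_mod_cast h
  · rw [e1, e2]
    have : ((α : ℝ) / 2 + β) < min ((LA.count false : ℝ)) ((RB.count true : ℝ)) :=
      lt_min h0LA h1RB
    linarith
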